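/- Let R(t) = e^{-|t|} for t ∈ ℝ, and for a > 0 define the measure μ on [0,1] by μ = (1/(a+2))δ₀ + (1/(a+2))δ₁ + (a/(a+2))λ, where λ is Lebesgue measure on (0,1). Then for every v ∈ [0,1], ∫₀¹ R(a(u−v)) μ(du) = 2/(a+2). -/

import Mathlib

open MeasureTheory Real

theorem stmt3 (a : ℝ) (ha : 0 < a) :
    let R : ℝ → ℝ := fun t => Real.exp (-|t|)
    let μ : Measure ℝ :=
      ENNReal.ofReal (1/(a+2)) • Measure.dirac 0 +
      ENNReal.ofReal (1/(a+2)) • Measure.dirac 1 +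
      ENNReal.ofReal (a/(a+2)) • (volume : Measure ℝ).restrict (Set.Ioo (0:ℝ) 1)
    ∀ v ∈ Set.Icc (0:ℝ) 1, (∫ u, R (a * (u - v)) ∂μ) = 2/(a+2) := by
  intro R μ v hv
  obtain ⟨hv0, hv1⟩ := hv
  have ha2 : (0:ℝ) < a + 2 := by linarith
  set f : ℝ → ℝ := fun u => Real.exp (-|a * (u - v)|) with hfdef
  have hfc : Continuous f := by
    apply Real.continuous_exp.comp
    continuity
  have hfb : ∀ u, ‖f u‖ ≤ 1 := by
    intro u
    rw [Real.norm_of_nonneg (Real.exp_pos _).le]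
    exact Real.exp_le_one_iff.mpr (neg_nonpos.mpr (abs_nonneg _))
  have hint_d : ∀ x : ℝ, Integrable f (Measure.dirac x) := by
    intro x
    exact (integrable_const (1:ℝ)).mono' hfc.aestronglyMeasurable
      (Filter.Eventually.of_forall hfb)
  have hint_v : IntegrableOn f (Set.Ioo (0:ℝ) 1) volume :=
    (hfc.integrableOn_Icc).mono_set Set.Ioo_subset_Icc_self
  have h1 : Integrable f (ENNReal.ofReal (1/(a+2)) • Measure.dirac (0:ℝ)) :=
    (hint_d 0).smul_measure ENNReal.ofReal_ne_top
  have h2 : Integrable f (ENNReal.ofReal (1/(a+2)) • Measure.dirac (1:ℝ)) :=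
    (hint_d 1).smul_measure ENNReal.ofReal_ne_top
  have hμ : (∫ u, R (a * (u - v)) ∂μ) = ∫ u, f u ∂μ := rfl
  rw [hμ]
  show (∫ u, f u ∂(_ + _ + _)) = _
  rw [integral_add_measure (h1.add_measure h2)
      (hint_v.smul_measure ENNReal.ofReal_ne_top),
    integral_add_measure h1 h2,
    integral_smul_measure, integral_smul_measure, integral_smul_measure,
    integral_dirac, integral_dirac,
    ENNReal.toReal_ofReal (by positivity : (0:ℝ) ≤ 1/(a+2)),
    ENNReal.toReal_ofReal (by positivity : (0:ℝ) ≤ a/(a+2))]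
  have hf0 : f 0 = Real.exp (-(a*v)) := by
    simp only [hfdef]
    rw [show |a * (0 - v)| = a * v by
      rw [abs_of_nonpos (by nlinarith)]; ring]
  have hf1 : f 1 = Real.exp (-(a*(1-v))) := by
    simp only [hfdef]
    rw [abs_of_nonneg (by nlinarith)]
  -- the Lebesgue part
  have hIoo : (∫ u in Set.Ioo (0:ℝ) 1, f u) = ∫ u in (0:ℝ)..1, f u := by
    rw [intervalIntegral.integral_of_le (by norm_num), ← integral_Ioc_eq_integral_Ioo]
  have hsplit : (∫ u in (0:ℝ)..1, f u) = (∫ u in (0:ℝ)..v, f u) + ∫ u in v..(1:ℝ), f u :=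
    (intervalIntegral.integral_add_adjacent_intervals
      (hfc.intervalIntegrable 0 v) (hfc.intervalIntegrable v 1)).symm
  have hI1 : (∫ u in (0:ℝ)..v, f u) = (1 - Real.exp (-(a*v))) / a := by
    have : (∫ u in (0:ℝ)..v, f u) = ∫ u in (0:ℝ)..v, Real.exp (a*u) * Real.exp (-(a*v)) := by
      apply intervalIntegral.integral_congr
      intro u hu
      rw [Set.uIcc_of_le hv0] at hu
      simp only [hfdef, ← Real.exp_add]
      congr 1
      rw [abs_of_nonpos (by nlinarith [hu.2])]
      ring
    rw [this, intervalIntegral.integral_mul_const,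
      intervalIntegral.integral_comp_mul_left (fun x => Real.exp x) ha.ne',
      integral_exp]
    simp only [mul_zero, Real.exp_zero, smul_eq_mul]
    have hx : Real.exp (a*v) * Real.exp (-(a*v)) = 1 := by
      rw [← Real.exp_add, show a*v + -(a*v) = 0 by ring, Real.exp_zero]
    linear_combination a⁻¹ * hx
  have hI2 : (∫ u in v..(1:ℝ), f u) = (1 - Real.exp (-(a*(1-v)))) / a := by
    have : (∫ u in v..(1:ℝ), f u) = ∫ u in v..(1:ℝ), Real.exp (-a*u) * Real.exp (a*v) := by
      apply intervalIntegral.integral_congr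
      intro u hu
      rw [Set.uIcc_of_le hv1] at hu
      simp only [hfdef, ← Real.exp_add]
      congr 1
      rw [abs_of_nonneg (by nlinarith [hu.1])]
      ring
    rw [this, intervalIntegral.integral_mul_const,
      intervalIntegral.integral_comp_mul_left (fun x => Real.exp x) (neg_ne_zero.mpr ha.ne'),
      integral_exp]
    simp only [smul_eq_mul]
    rw [inv_neg]
    have hx2 : Real.exp (-a*v) * Real.exp (a*v) = 1 := by
      rw [← Real.exp_add, show -a*v + a*v = 0 by ring, Real.exp_zero]
    have hy : Real.exp (-a*1) * Real.exp (a*v) = Real.exp (-(a*(1-v))) := by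
      rw [← Real.exp_add]; congr 1; ring
    linear_combination (-(a⁻¹)) * hy + a⁻¹ * hx2
  rw [hf0, hf1, hIoo, hsplit, hI1, hI2]
  have hEa := Real.exp_pos (-(a*v))
  simp only [smul_eq_mul]
  field_simp
  ring
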